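/- Let a and b be integers with a ≥ 2 and b ≥ 1. Then a · C(ab − a, b − 1) / C(ab, b) ≥ (1 − 1/(a−1))^{a−1}, where C(·,·) denotes the binomial coefficient. (The left-hand side is the probability that, when b balls are placed uniformly at random into ab positions, exactly one ball lands among the first a positions.) -/

import Mathlib

open Nat

-- Key counting identity: with N = (c+2)(d+1),
-- (c+2) * C((c+2)d, d) * (N-1).descFactorial (c+1) = C(N, d+1) * ((c+1)(d+1)).descFactorial (c+1)
lemma key_id (c d : ℕ) :
    (c + 2) * (((c + 2) * d).choose d) * (((c + 2) * (d + 1) - 1).descFactorial (c + 1)) =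
      (((c + 2) * (d + 1)).choose (d + 1)) * (((c + 1) * (d + 1)).descFactorial (c + 1)) := by
  set N := (c + 2) * (d + 1) with hN
  have h1 : ((c + 2) * d).choose d * d ! * ((c + 1) * d)! = ((c + 2) * d)! := by
    have := Nat.choose_mul_factorial_mul_factorial (show d ≤ (c + 2) * d by nlinarith)
    have e : (c + 2) * d - d = (c + 1) * d := by ring_nf; omega
    rw [e] at this; exact this
  have h2 : ((N - (c + 2))!) * (N - 1).descFactorial (c + 1) = (N - 1)! := by
    have e : N - 1 - (c + 1) = N - (c + 2) := by omega
    have hge : c + 2 ≤ N := Nat.le_mul_of_pos_right _ (by omega)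
    have := Nat.factorial_mul_descFactorial (n := N - 1) (k := c + 1) (by omega)
    rwa [e] at this
  have h3 : ((c + 1) * d)! * ((c + 1) * (d + 1)).descFactorial (c + 1) = ((c + 1) * (d + 1))! := by
    have e : (c + 1) * (d + 1) - (c + 1) = (c + 1) * d := by ring_nf; omega
    have := Nat.factorial_mul_descFactorial (n := (c + 1) * (d + 1)) (k := c + 1)
      (by nlinarith)
    rwa [e] at this
  have h4 : N.choose (d + 1) * (d + 1)! * ((c + 1) * (d + 1))! = N ! := by
    have hge : (c + 1) * (d + 1) + (d + 1) = N := by ring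
    have := Nat.choose_mul_factorial_mul_factorial (show d + 1 ≤ N by omega)
    have e : N - (d + 1) = (c + 1) * (d + 1) := by omega
    rw [e] at this; exact this
  have hNe : N - (c + 2) = (c + 2) * d := by
    have : (c + 2) * d + (c + 2) = N := by ring
    omega
  have hNfac : N * (N - 1)! = N ! := by
    have hp : 0 < N := by rw [hN]; exact Nat.mul_pos (by omega) (by omega)
    have : N = (N - 1) + 1 := by omega
    rw [this, Nat.factorial_succ]; simp
  apply Nat.eq_of_mul_eq_mul_right
    (show 0 < (d + 1) * d ! * ((c + 1) * d)! * ((c + 2) * d)! by positivity)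
  calc (c + 2) * ((c + 2) * d).choose d * ((N - 1).descFactorial (c + 1)) *
        ((d + 1) * d ! * ((c + 1) * d)! * ((c + 2) * d)!)
      = ((c + 2) * (d + 1)) * (((c + 2) * d).choose d * d ! * ((c + 1) * d)!) *
        (((c + 2) * d)! * (N - 1).descFactorial (c + 1)) := by ring
    _ = N * ((c + 2) * d)! * ((N - (c + 2))! * (N - 1).descFactorial (c + 1)) := by
        rw [h1, hNe, hN]; try ring
    _ = N ! * ((c + 2) * d)! := by rw [h2, ← hNfac]; ring
    _ = (N.choose (d + 1) * (d + 1)! * ((c + 1) * (d + 1))!) * ((c + 2) * d)! := by rw [h4]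
    _ = N.choose (d + 1) * (((c + 1) * d)! * ((c + 1) * (d + 1)).descFactorial (c + 1)) *
        ((d + 1) * d ! * ((c + 2) * d)!) := by rw [h3, Nat.factorial_succ]; ring
    _ = N.choose (d + 1) * ((c + 1) * (d + 1)).descFactorial (c + 1) *
        ((d + 1) * d ! * ((c + 1) * d)! * ((c + 2) * d)!) := by ring

lemma df_ineq (c d : ℕ) : ∀ k, k ≤ c + 1 →
    ((c : ℝ) / (c + 1)) ^ k * ((((c + 2) * (d + 1) - 1).descFactorial k : ℕ) : ℝ) ≤
      ((((c + 1) * (d + 1)).descFactorial k : ℕ) : ℝ) := by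
  intro k
  induction k with
  | zero => intro _; simp
  | succ k ih =>
    intro hk
    have hk' : k ≤ c := by omega
    have ihk := ih (by omega)
    have hge1 : c + 2 ≤ (c + 2) * (d + 1) := Nat.le_mul_of_pos_right _ (by omega)
    have hge2 : c + 1 ≤ (c + 1) * (d + 1) := Nat.le_mul_of_pos_right _ (by omega)
    have h0 : 1 ≤ (c + 2) * (d + 1) := by omega
    have h1 : k ≤ (c + 2) * (d + 1) - 1 := by omega
    have h2 : k ≤ (c + 1) * (d + 1) := by omega
    rw [Nat.descFactorial_succ, Nat.descFactorial_succ]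
    push_cast [h1, h2, h0]
    have hq : (0:ℝ) ≤ (c : ℝ) / (c + 1) := by positivity
    have hdf : (0:ℝ) ≤ ((((c + 2) * (d + 1) - 1).descFactorial k : ℕ) : ℝ) := by positivity
    have key : ((c : ℝ) / (c + 1)) * (((c + 2) * (d + 1) : ℝ) - 1 - k) ≤
        ((c + 1) * (d + 1) : ℝ) - k := by
      rw [div_mul_eq_mul_div, div_le_iff₀ (by positivity)]
      have : (k : ℝ) ≤ c := by exact_mod_cast hk'
      push_cast
      nlinarith
    calc ((c : ℝ) / (c + 1)) ^ (k + 1) *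
          ((((c + 2) * (d + 1) : ℝ) - 1 - k) * (((c + 2) * (d + 1) - 1).descFactorial k : ℕ))
        = (((c : ℝ) / (c + 1)) * (((c + 2) * (d + 1) : ℝ) - 1 - k)) *
          (((c : ℝ) / (c + 1)) ^ k * ((((c + 2) * (d + 1) - 1).descFactorial k : ℕ) : ℝ)) := by
          ring
      _ ≤ (((c + 1) * (d + 1) : ℝ) - k) * ((((c + 1) * (d + 1)).descFactorial k : ℕ) : ℝ) := by
          apply mul_le_mul key ihk (by positivity)
          have : (k:ℝ) + 1 ≤ (c + 1) * (d + 1) := by exact_mod_cast (by omega : k + 1 ≤ (c+1)*(d+1))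
          linarith

/-- For integers `a ≥ 2` and `b ≥ 1`,
`a·C(ab−a, b−1)/C(ab, b) ≥ (1 − 1/(a−1))^{a−1}`: the probability that, placing `b` balls
uniformly at random into `ab` positions, exactly one ball lands among the first `a`
positions, is at least `(1 − 1/(a−1))^{a−1}`. -/
theorem balls_in_first_block_probability (a b : ℕ) (ha : 2 ≤ a) (hb : 1 ≤ b) :
    (1 - 1 / ((a : ℝ) - 1)) ^ (a - 1) ≤
      (a : ℝ) * ((a * b - a).choose (b - 1)) / ((a * b).choose b) := by
  obtain ⟨c, rfl⟩ : ∃ c, a = c + 2 := ⟨a - 2, by omega⟩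
  obtain ⟨d, rfl⟩ : ∃ d, b = d + 1 := ⟨b - 1, by omega⟩
  have e1 : (c + 2) * (d + 1) - (c + 2) = (c + 2) * d := by ring_nf; omega
  have e2 : d + 1 - 1 = d := rfl
  have e3 : c + 2 - 1 = c + 1 := rfl
  rw [e1, e2, e3]
  set N := (c + 2) * (d + 1) with hN
  have hge : (c + 1) * (d + 1) + (d + 1) = N := by ring
  have hge2 : d + 1 ≤ (c + 1) * (d + 1) := Nat.le_mul_of_pos_left _ (by omega)
  have hB : (0:ℝ) < (N.choose (d + 1) : ℝ) := by
    exact_mod_cast Nat.choose_pos (show d + 1 ≤ N by omega)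
  have hDF1 : (0:ℝ) < (((N - 1).descFactorial (c + 1) : ℕ) : ℝ) := by
    have : 0 < (N - 1).descFactorial (c + 1) := by
      refine Nat.pos_of_ne_zero fun h => ?_
      have := Nat.descFactorial_eq_zero_iff_lt.mp h
      have hge3 : c + 2 ≤ N := Nat.le_mul_of_pos_right _ (by omega)
      omega
    exact_mod_cast this
  have hid : ((c:ℝ) + 2) * (((c + 2) * d).choose d : ℝ) * (((N - 1).descFactorial (c + 1) : ℕ) : ℝ)
      = (N.choose (d + 1) : ℝ) * ((((c + 1) * (d + 1)).descFactorial (c + 1) : ℕ) : ℝ) := by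
    exact_mod_cast congrArg (Nat.cast : ℕ → ℝ) (key_id c d)
  have hratio : ((c:ℝ) + 2) * (((c + 2) * d).choose d : ℝ) / (N.choose (d + 1) : ℝ)
      = ((((c + 1) * (d + 1)).descFactorial (c + 1) : ℕ) : ℝ) /
        (((N - 1).descFactorial (c + 1) : ℕ) : ℝ) := by
    rw [div_eq_div_iff hB.ne' hDF1.ne']
    linarith [hid]
  have hcast : ((c + 2 : ℕ) : ℝ) = (c:ℝ) + 2 := by push_cast; ring
  rw [hcast, hratio]
  have hq : (1 : ℝ) - 1 / (((c:ℝ) + 2) - 1) = (c:ℝ) / (c + 1) := by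
    have h21 : ((c:ℝ) + 2) - 1 = (c:ℝ) + 1 := by ring
    have hne : ((c:ℝ) + 1) ≠ 0 := by positivity
    rw [h21]
    field_simp
    ring
  rw [hq, le_div_iff₀ hDF1]
  exact df_ineq c d (c + 1) le_rfl
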